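/- S4FPF is not contained in S4.2.1: the Grzegorczyk axiom □(□(p→□p)→p)→p is valid on every finite partial function poset (hence belongs to S4FPF) but is not a theorem of S4.2.1. -/
import Mathlib


namespace MLAR

/-- Modal formulas over a countably infinite set of propositional variables (indexed by ℕ). -/
inductive MF : Type where
  | top : MF
  | var : ℕ → MF
  | and : MF → MF → MF
  | neg : MF → MF
  | dia : MF → MF

namespace MF

/-- □φ := ¬◇¬φ -/
def box (φ : MF) : MF := neg (dia (neg φ))

/-- Material implication, definable classically from ∧ and ¬. -/
def imp (φ ψ : MF) : MF := neg (and φ (neg ψ))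

/-- Uniform substitution. -/
def subst (σ : ℕ → MF) : MF → MF
  | top => top
  | var p => σ p
  | and φ ψ => and (subst σ φ) (subst σ ψ)
  | neg φ => neg (subst σ φ)
  | dia φ => dia (subst σ φ)

/-- Satisfaction of a modal formula at a world of a Kripke model. -/
def Sat {W : Type*} (R : W → W → Prop) (V : ℕ → Set W) : MF → W → Prop
  | top, _ => True
  | var p, w => w ∈ V p
  | and φ ψ, w => Sat R V φ w ∧ Sat R V ψ w
  | neg φ, w => ¬ Sat R V φ w
  | dia φ, w => ∃ v, R w v ∧ Sat R V φ v

end MF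

/-- A boolean evaluation: respects ⊤, ∧, ¬, treating variables and ◇-formulas as atoms. -/
def IsPropEval (v : MF → Prop) : Prop :=
  v MF.top ∧ (∀ φ ψ, v (MF.and φ ψ) ↔ (v φ ∧ v ψ)) ∧ (∀ φ, v (MF.neg φ) ↔ ¬ v φ)

/-- Propositional tautologies. -/
def IsTautology (φ : MF) : Prop := ∀ v, IsPropEval v → v φ

/-- The K-axiom □(p→q)→(□p→□q). -/
def axK : MF := (((MF.var 0).imp (MF.var 1)).box).imp (((MF.var 0).box).imp ((MF.var 1).box))

/-- Normal modal logics. -/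
def IsNormal (L : Set MF) : Prop :=
  (∀ φ, IsTautology φ → φ ∈ L) ∧
  axK ∈ L ∧
  (∀ φ ψ, φ ∈ L → φ.imp ψ ∈ L → ψ ∈ L) ∧
  (∀ φ σ, φ ∈ L → φ.subst σ ∈ L) ∧
  (∀ φ, φ ∈ L → φ.box ∈ L)

/-- The smallest normal modal logic containing Γ. -/
def KPlus (Γ : Set MF) : Set MF := ⋂₀ {L | IsNormal L ∧ Γ ⊆ L}

/-- (T) = p → ◇p -/
def axT : MF := (MF.var 0).imp ((MF.var 0).dia)
/-- (4) = ◇◇p → ◇p -/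
def ax4 : MF := ((MF.var 0).dia.dia).imp ((MF.var 0).dia)
/-- (.2) = ◇□p → □◇p -/
def axDot2 : MF := ((MF.var 0).box.dia).imp ((MF.var 0).dia.box)
/-- (.1) = □◇p → ◇□p -/
def axDot1 : MF := ((MF.var 0).dia.box).imp ((MF.var 0).box.dia)
/-- Grzegorczyk axiom □(□(p→□p)→p)→p -/
def axGrz : MF := ((((MF.var 0).imp ((MF.var 0).box)).box.imp (MF.var 0)).box).imp (MF.var 0)

def S4 : Set MF := KPlus {axT, ax4}
def S4Dot2 : Set MF := KPlus {axT, ax4, axDot2}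
def S4Dot1 : Set MF := KPlus {axT, ax4, axDot1}
def S4Dot2Dot1 : Set MF := KPlus {axT, ax4, axDot2, axDot1}
def Grz : Set MF := KPlus {axGrz}

/-- Transition systems over a set AP of atomic propositions. -/
structure TS (AP : Type) : Type 1 where
  State : Type
  rel : State → State → Prop
  init : Set State
  label : State → Set AP
  nonempty : Nonempty State
  serial : ∀ s, ∃ t, rel s t

/-- `f` witnesses that T₁ is an abstraction of T₂. -/
def IsAbstractionMap {AP : Type} (T₁ T₂ : TS AP) (f : T₂.State → T₁.State) : Prop :=
  Function.Surjective f ∧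
  (∀ s, T₁.label (f s) = T₂.label s) ∧
  (∀ a b, T₁.rel a b ↔ ∃ s t, T₂.rel s t ∧ f s = a ∧ f t = b) ∧
  T₁.init = f '' T₂.init

/-- `Abs T₁ T₂` : T₁ is an abstraction of T₂ (written T₁ ⇝ T₂; T₂ is a refinement of T₁). -/
def Abs {AP : Type} (T₁ T₂ : TS AP) : Prop := ∃ f, IsAbstractionMap T₁ T₂ f

mutual
/-- CTL state formulas. -/
inductive CTLs (AP : Type) : Type where
  | top : CTLs AP
  | atom : AP → CTLs AP
  | and : CTLs AP → CTLs AP → CTLs AP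
  | neg : CTLs AP → CTLs AP
  | ex : CTLp AP → CTLs AP
  | al : CTLp AP → CTLs AP
/-- CTL path formulas. -/
inductive CTLp (AP : Type) : Type where
  | next : CTLs AP → CTLp AP
  | untl : CTLs AP → CTLs AP → CTLp AP
end

/-- Infinite paths of a transition system. -/
def TS.IsPath {AP : Type} (T : TS AP) (π : ℕ → T.State) : Prop := ∀ i, T.rel (π i) (π (i + 1))

mutual
/-- Satisfaction of CTL state formulas at states. -/
def CTLs.Sat {AP : Type} (T : TS AP) : CTLs AP → T.State → Prop
  | .top, _ => True
  | .atom a, s => a ∈ T.label s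
  | .and φ ψ, s => CTLs.Sat T φ s ∧ CTLs.Sat T ψ s
  | .neg φ, s => ¬ CTLs.Sat T φ s
  | .ex φ, s => ∃ π, T.IsPath π ∧ π 0 = s ∧ CTLp.Sat T φ π
  | .al φ, s => ∀ π, T.IsPath π → π 0 = s → CTLp.Sat T φ π
/-- Satisfaction of CTL path formulas on paths. -/
def CTLp.Sat {AP : Type} (T : TS AP) : CTLp AP → (ℕ → T.State) → Prop
  | .next φ, π => CTLs.Sat T φ (π 1)
  | .untl φ ψ, π => ∃ j, CTLs.Sat T ψ (π j) ∧ ∀ i, i < j → CTLs.Sat T φ (π i)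
end

/-- A transition system satisfies a CTL state formula iff all its initial states do. -/
def TS.sat {AP : Type} (T : TS AP) (Φ : CTLs AP) : Prop := ∀ s ∈ T.init, CTLs.Sat T Φ s

/-- Admissible valuations on the class C: each variable denotes a CTL-expressible set. -/
def AdmissibleVal {AP : Type} (C : Set (TS AP)) (V : ℕ → Set {S : TS AP // S ∈ C}) : Prop :=
  ∀ p, ∃ Φ : CTLs AP, ∀ S : {S : TS AP // S ∈ C}, S ∈ V p ↔ (S : TS AP).sat Φ

/-- The refinement accessibility relation ⇝ on the class C. -/
def refRel {AP : Type} (C : Set (TS AP)) :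
    {S : TS AP // S ∈ C} → {S : TS AP // S ∈ C} → Prop :=
  fun S₁ S₂ => Abs S₁.1 S₂.1

/-- Validity of a modal formula at a world of the general frame (C, ⇝, Admiss(CTL)). -/
def ValidAt {AP : Type} (C : Set (TS AP)) (φ : MF) (S : {S : TS AP // S ∈ C}) : Prop :=
  ∀ V, AdmissibleVal C V → MF.Sat (refRel C) V φ S

/-- Validity on the general frame (C, ⇝, Admiss(CTL)). -/
def ValidOn {AP : Type} (C : Set (TS AP)) (φ : MF) : Prop := ∀ S, ValidAt C φ S

/-- The class of all finite abstractions of T. -/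
def FinAbs {AP : Type} (T : TS AP) : Set (TS AP) := {S | Finite S.State ∧ Abs S T}

/-- The class of all abstractions of T. -/
def AllAbs {AP : Type} (T : TS AP) : Set (TS AP) := {S | Abs S T}

/-- MLAR^fin_T. -/
def MLARfin {AP : Type} (T : TS AP) : Set MF := {φ | ValidOn (FinAbs T) φ}
/-- MLAR^all_T. -/
def MLARall {AP : Type} (T : TS AP) : Set MF := {φ | ValidOn (AllAbs T) φ}
set_option linter.dupNamespace false in
/-- MLAR on the class of all transition systems over the fixed countably infinite AP = ℕ. -/
def MLAR : Set MF := {φ | ValidOn (Set.univ : Set (TS ℕ)) φ}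

/-- Finite partial functions {0,…,n−1} ⇀ {0,1}. -/
def FPF (n : ℕ) : Type := Fin n → Option Bool

/-- g ≼ h iff h extends g. -/
def FPFle {n : ℕ} (g h : FPF n) : Prop := ∀ i x, g i = some x → h i = some x

/-- The modal logic of all finite partial function posets. -/
def S4FPF : Set MF := {φ | ∀ n : ℕ, ∀ V : ℕ → Set (FPF n), ∀ w, MF.Sat FPFle V φ w}

/-- Admissible-set algebra of a general Kripke frame:
closed under complements and finite (including empty and binary) unions. -/
def IsGeneralFrameAdmiss {W : Type*} (𝒜 : Set (Set W)) : Prop :=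
  (∅ : Set W) ∈ 𝒜 ∧ (∀ A ∈ 𝒜, Aᶜ ∈ 𝒜) ∧ (∀ A ∈ 𝒜, ∀ B ∈ 𝒜, A ∪ B ∈ 𝒜)

/-- Formulas valid at a world of a general Kripke frame (W, R, 𝒜). -/
def GValidAt {W : Type*} (R : W → W → Prop) (𝒜 : Set (Set W)) (φ : MF) (c : W) : Prop :=
  ∀ V : ℕ → Set W, (∀ p, V p ∈ 𝒜) → MF.Sat R V φ c

/-- A is a pure button at c: □(b→□b) and □◇b hold at c under V(b) = A. -/
def PureButton {W : Type*} (R : W → W → Prop) (c : W) (A : Set W) : Prop :=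
  (∀ d, R c d → d ∈ A → ∀ e, R d e → e ∈ A) ∧ (∀ d, R c d → ∃ e, R d e ∧ e ∈ A)

/-- A is a pure weak button at c: □(b→□b) and ◇b hold at c under V(b) = A. -/
def PureWeakButton {W : Type*} (R : W → W → Prop) (c : W) (A : Set W) : Prop :=
  (∀ d, R c d → d ∈ A → ∀ e, R d e → e ∈ A) ∧ (∃ e, R c e ∧ e ∈ A)

/-- B is a switch at c: □(◇s ∧ ◇¬s) holds at c under V(s) = B. -/
def IsSwitch {W : Type*} (R : W → W → Prop) (c : W) (B : Set W) : Prop :=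
  ∀ d, R c d → (∃ e, R d e ∧ e ∈ B) ∧ (∃ e, R d e ∧ e ∉ B)

/-- C is a B-restricted switch at c:
□(¬B → (◇(s ∧ ¬B) ∧ ◇(¬s ∧ ¬B))) holds at c under V(s) = C. -/
def RestrictedSwitch {W : Type*} (R : W → W → Prop) (c : W) (B C : Set W) : Prop :=
  ∀ d, R c d → d ∉ B →
    (∃ e, R d e ∧ e ∈ C ∧ e ∉ B) ∧ (∃ e, R d e ∧ e ∉ C ∧ e ∉ B)

/-- Independence of unpushed pure buttons A and switches B at c. -/
def Independent {W : Type*} (R : W → W → Prop) (c : W) {n m : ℕ}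
    (A : Fin n → Set W) (B : Fin m → Set W) : Prop :=
  ∀ (I₀ I₁ : Set (Fin n)) (J₀ J₁ : Set (Fin m)), I₀ ⊆ I₁ →
    ∀ d, R c d →
      ((∀ i, i ∈ I₀ ↔ d ∈ A i) ∧ (∀ j, j ∈ J₀ ↔ d ∈ B j)) →
      ∃ e, R d e ∧ (∀ i, i ∈ I₁ ↔ e ∈ A i) ∧ (∀ j, j ∈ J₁ ↔ e ∈ B j)

/-- Independence until B of pure buttons A and B-restricted switches C at c. -/
def IndependentUntil {W : Type*} (R : W → W → Prop) (c : W) (Bb : Set W) {n m : ℕ}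
    (A : Fin n → Set W) (C : Fin m → Set W) : Prop :=
  ∀ (I₀ I₁ : Set (Fin n)) (J₀ J₁ : Set (Fin m)), I₀ ⊆ I₁ →
    ∀ d, R c d →
      ((∀ i, i ∈ I₀ ↔ d ∈ A i) ∧ (∀ j, j ∈ J₀ ↔ d ∈ C j) ∧ d ∉ Bb) →
      ∃ e, R d e ∧ (∀ i, i ∈ I₁ ↔ e ∈ A i) ∧ (∀ j, j ∈ J₁ ↔ e ∈ C j) ∧ e ∉ Bb

/-- (L, Rr) is a decision at c: a pair of mutually exclusive unpushed pure weak buttons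
whose union is an unpushed pure button, with □(¬l ∨ ¬r) and □((◇l ∧ ◇r) ∨ l ∨ r) at c. -/
def Decision {W : Type*} (R : W → W → Prop) (c : W) (L Rr : Set W) : Prop :=
  PureWeakButton R c L ∧ c ∉ L ∧
  PureWeakButton R c Rr ∧ c ∉ Rr ∧
  PureButton R c (L ∪ Rr) ∧ c ∉ L ∪ Rr ∧
  (∀ d, R c d → ¬(d ∈ L ∧ d ∈ Rr)) ∧
  (∀ d, R c d → (((∃ e, R d e ∧ e ∈ L) ∧ (∃ e, R d e ∧ e ∈ Rr)) ∨ d ∈ L ∨ d ∈ Rr))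

/-- Independence of decisions at c. -/
def IndependentDecisions {W : Type*} (R : W → W → Prop) (c : W) {n : ℕ}
    (L Rr : Fin n → Set W) : Prop :=
  ∀ (I₀ I₁ J₀ J₁ : Set (Fin n)), I₀ ⊆ I₁ → J₀ ⊆ J₁ → (∀ i ∈ J₁, i ∉ I₁) →
    ∀ d, R c d →
      ((∀ i, i ∈ I₀ ↔ d ∈ L i) ∧ (∀ i, i ∈ J₀ ↔ d ∈ Rr i)) →
      ∃ e, R d e ∧ (∀ i, i ∈ I₁ ↔ e ∈ L i) ∧ (∀ i, i ∈ J₁ ↔ e ∈ Rr i)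

/-! ### Auxiliary material for stmt_14 -/

section Aux

open Classical

lemma sat_box {W : Type*} (R : W → W → Prop) (V : ℕ → Set W) (φ : MF) (w : W) :
    MF.Sat R V φ.box w ↔ ∀ v, R w v → MF.Sat R V φ v := by
  simp only [MF.box, MF.Sat]
  push_neg
  tauto

lemma sat_imp {W : Type*} (R : W → W → Prop) (V : ℕ → Set W) (φ ψ : MF) (w : W) :
    MF.Sat R V (φ.imp ψ) w ↔ (MF.Sat R V φ w → MF.Sat R V ψ w) := by
  simp only [MF.imp, MF.Sat]
  tauto

lemma sat_dia {W : Type*} (R : W → W → Prop) (V : ℕ → Set W) (φ : MF) (w : W) :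
    MF.Sat R V φ.dia w ↔ ∃ v, R w v ∧ MF.Sat R V φ v := Iff.rfl

lemma sat_var {W : Type*} (R : W → W → Prop) (V : ℕ → Set W) (p : ℕ) (w : W) :
    MF.Sat R V (MF.var p) w ↔ w ∈ V p := Iff.rfl

lemma sat_subst {W : Type*} (R : W → W → Prop) (V : ℕ → Set W) (σ : ℕ → MF) :
    ∀ (φ : MF) (w : W),
      MF.Sat R V (φ.subst σ) w ↔ MF.Sat R (fun p => {x | MF.Sat R V (σ p) x}) φ w := by
  intro φ
  induction φ with
  | top => intro w; simp [MF.subst, MF.Sat]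
  | var p => intro w; exact Iff.rfl
  | and φ ψ ihφ ihψ => intro w; simp [MF.subst, MF.Sat, ihφ, ihψ]
  | neg φ ih => intro w; simp [MF.subst, MF.Sat, ih]
  | dia φ ih => intro w; simp only [MF.subst, MF.Sat]; exact exists_congr fun v => by rw [ih]

/-- The set of formulas valid on a Kripke frame. -/
def FrameLogic {W : Type*} (R : W → W → Prop) : Set MF := {φ | ∀ V w, MF.Sat R V φ w}

lemma frameLogic_normal {W : Type*} (R : W → W → Prop) : IsNormal (FrameLogic R) := by
  refine ⟨?_, ?_, ?_, ?_, ?_⟩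
  · intro φ hφ V w
    exact hφ (fun ψ => MF.Sat R V ψ w) ⟨trivial, fun _ _ => Iff.rfl, fun _ => Iff.rfl⟩
  · intro V w
    simp only [axK, sat_imp, sat_box]
    intro h h0 v hv
    exact h v hv (h0 v hv)
  · intro φ ψ hφ hi V w
    have := hi V w
    rw [sat_imp] at this
    exact this (hφ V w)
  · intro φ σ hφ V w
    rw [sat_subst]
    exact hφ _ w
  · intro φ hφ V w
    rw [sat_box]
    intro v _
    exact hφ V v

/-- The 3-point frame: worlds 0,1 form a cluster, both see the endpoint 2. -/
def R3 : Fin 3 → Fin 3 → Prop := fun x y => (x ≠ 2 ∧ y ≠ 2) ∨ y = 2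

lemma R3_refl : ∀ x, R3 x x := by
  intro x
  by_cases h : x = 2
  · exact Or.inr h
  · exact Or.inl ⟨h, h⟩

lemma R3_trans : ∀ x y z, R3 x y → R3 y z → R3 x z := by
  intro x y z hxy hyz
  rcases hyz with ⟨hy, hz⟩ | hz
  · rcases hxy with ⟨hx, _⟩ | hy2
    · exact Or.inl ⟨hx, hz⟩
    · exact absurd hy2 hy
  · exact Or.inr hz

lemma R3_to2 : ∀ x, R3 x 2 := fun _ => Or.inr rfl

lemma R3_from2 : ∀ y, R3 2 y → y = 2 := by
  intro y h
  rcases h with ⟨h2, _⟩ | h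
  · exact absurd rfl h2
  · exact h

lemma axT_valid : axT ∈ FrameLogic R3 := by
  intro V w
  simp only [axT, sat_imp, sat_dia, sat_var]
  intro h
  exact ⟨w, R3_refl w, h⟩

lemma ax4_valid : ax4 ∈ FrameLogic R3 := by
  intro V w
  simp only [ax4, sat_imp, sat_dia, sat_var]
  rintro ⟨v, hwv, u, hvu, hu⟩
  exact ⟨u, R3_trans _ _ _ hwv hvu, hu⟩

lemma axDot2_valid : axDot2 ∈ FrameLogic R3 := by
  intro V w
  simp only [axDot2, sat_imp, sat_box, sat_dia, sat_var]
  rintro ⟨v, hwv, hv⟩ d hwd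
  exact ⟨2, R3_to2 d, hv 2 (R3_to2 v)⟩

lemma axDot1_valid : axDot1 ∈ FrameLogic R3 := by
  intro V w
  simp only [axDot1, sat_imp, sat_box, sat_dia, sat_var]
  intro h
  obtain ⟨u, h2u, hu⟩ := h 2 (R3_to2 w)
  have hu2 : u = 2 := R3_from2 u h2u
  subst hu2
  refine ⟨2, R3_to2 w, fun e h2e => ?_⟩
  rw [R3_from2 e h2e]
  exact hu

/-- The countermodel valuation refuting Grz on R3. -/
def V3 : ℕ → Set (Fin 3) := fun _ => {x | x = 1 ∨ x = 2}

lemma axGrz_not_valid : ¬ MF.Sat R3 V3 axGrz 0 := by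
  simp only [axGrz, sat_imp, sat_box, sat_var]
  intro h
  have h0 : (0 : Fin 3) ∈ V3 0 := by
    apply h
    intro d hd hB
    by_cases hd2 : d = 2
    · subst hd2
      exact Or.inr rfl
    · exfalso
      have h1 : R3 d 1 := Or.inl ⟨hd2, by decide⟩
      have hp1 : (1 : Fin 3) ∈ V3 0 := Or.inl rfl
      have h00 : (0 : Fin 3) ∈ V3 0 := hB 1 h1 hp1 0 (Or.inl ⟨by decide, by decide⟩)
      rcases h00 with h | h <;> exact absurd h (by decide)
  rcases h0 with h | h <;> exact absurd h (by decide)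

lemma axGrz_not_in_S4Dot2Dot1 : axGrz ∉ S4Dot2Dot1 := by
  intro hmem
  have hsub : S4Dot2Dot1 ⊆ FrameLogic R3 := by
    apply Set.sInter_subset_of_mem
    refine ⟨frameLogic_normal R3, ?_⟩
    intro φ hφ
    simp only [Set.mem_insert_iff, Set.mem_singleton_iff] at hφ
    rcases hφ with rfl | rfl | rfl | rfl
    · exact axT_valid
    · exact ax4_valid
    · exact axDot2_valid
    · exact axDot1_valid
  exact axGrz_not_valid (hsub hmem V3 0)

/-! Grz on finite partial function posets. -/

lemma FPFle_refl {n : ℕ} (g : FPF n) : FPFle g g := fun _ _ h => h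

lemma FPFle_trans {n : ℕ} {g h k : FPF n} (h1 : FPFle g h) (h2 : FPFle h k) : FPFle g k :=
  fun i x hx => h2 i x (h1 i x hx)

/-- Number of defined positions. -/
def msize {n : ℕ} (g : FPF n) : ℕ := (Finset.univ.filter fun i => (g i).isSome).card

lemma msize_le {n : ℕ} (g : FPF n) : msize g ≤ n := by
  calc msize g ≤ (Finset.univ : Finset (Fin n)).card := Finset.card_filter_le _ _
    _ = n := by simp

lemma msize_lt {n : ℕ} {g h : FPF n} (hle : FPFle g h) (hne : g ≠ h) :
    msize g < msize h := by
  apply Finset.card_lt_card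
  constructor
  · intro i hi
    simp only [Finset.mem_filter, Finset.mem_univ, true_and] at hi ⊢
    obtain ⟨x, hx⟩ := Option.isSome_iff_exists.mp hi
    rw [hle i x hx]
    rfl
  · intro hsub
    apply hne
    funext i
    cases hgi : g i with
    | some x => exact (hle i x hgi).symm
    | none =>
      cases hhi : h i with
      | none => rfl
      | some y =>
        have : i ∈ Finset.univ.filter fun j => ((g j).isSome) := by
          apply hsub
          simp [hhi]
        simp [hgi] at this

lemma msize_mono {n : ℕ} {g h : FPF n} (hle : FPFle g h) : msize g ≤ msize h := by
  apply Finset.card_le_card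
  intro i hi
  simp only [Finset.mem_filter, Finset.mem_univ, true_and] at hi ⊢
  obtain ⟨x, hx⟩ := Option.isSome_iff_exists.mp hi
  rw [hle i x hx]
  rfl

lemma fpf_key {n : ℕ} (V : ℕ → Set (FPF n)) (w : FPF n)
    (H : ∀ d, FPFle w d →
      (∀ u, FPFle d u → (u ∈ V 0 → ∀ t, FPFle u t → t ∈ V 0)) → d ∈ V 0) :
    w ∈ V 0 := by
  suffices h : ∀ k (v : FPF n), n - msize v ≤ k → FPFle w v → v ∈ V 0 by
    exact h n w (by omega) (FPFle_refl w)
  intro k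
  induction k with
  | zero =>
    intro v hk hwv
    by_contra hv0
    have := H v hwv
    have hne : ¬ ∀ u, FPFle v u → (u ∈ V 0 → ∀ t, FPFle u t → t ∈ V 0) := by
      intro hall; exact hv0 (this hall)
    push_neg at hne
    obtain ⟨u, hvu, hu0, t, hut, ht0⟩ := hne
    have huv : u ≠ v := fun h => hv0 (h ▸ hu0)
    have h1 : msize v < msize u := msize_lt hvu (Ne.symm huv)
    have h2 : msize u ≤ msize t := msize_mono hut
    have h3 : msize t ≤ n := msize_le t
    omega
  | succ k ih =>
    intro v hk hwv
    by_contra hv0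
    have := H v hwv
    have hne : ¬ ∀ u, FPFle v u → (u ∈ V 0 → ∀ t, FPFle u t → t ∈ V 0) := by
      intro hall; exact hv0 (this hall)
    push_neg at hne
    obtain ⟨u, hvu, hu0, t, hut, ht0⟩ := hne
    have huv : u ≠ v := fun h => hv0 (h ▸ hu0)
    have h1 : msize v < msize u := msize_lt hvu (Ne.symm huv)
    have h2 : msize u ≤ msize t := msize_mono hut
    have h3 : msize t ≤ n := msize_le t
    exact ht0 (ih t (by omega) (FPFle_trans hwv (FPFle_trans hvu hut)))

lemma axGrz_in_S4FPF : axGrz ∈ S4FPF := by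
  intro n V w
  simp only [axGrz, sat_imp, sat_box, sat_var]
  intro h
  exact fpf_key V w h

end Aux

/-- S4FPF is not contained in S4.2.1: the Grzegorczyk axiom belongs to S4FPF
but is not a theorem of S4.2.1. -/
theorem stmt_14 : axGrz ∈ S4FPF ∧ axGrz ∉ S4Dot2Dot1 ∧ ¬ S4FPF ⊆ S4Dot2Dot1 := by
  refine ⟨axGrz_in_S4FPF, axGrz_not_in_S4Dot2Dot1, ?_⟩
  intro hsub
  exact axGrz_not_in_S4Dot2Dot1 (hsub axGrz_in_S4FPF)

end MLAR
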